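/- Under the average reward criterion, Whittle's index for a positively correlated channel (p11 ≥ p01) with bandwidth B at belief ω with ω_o ≤ ω < p11 equals W(ω) = ω·B/(1 - p11 + ω), and for ω ≤ p01 or ω ≥ p11, W(ω) = ω·B. This function is monotonically increasing in ω on [0,1]. -/
import Mathlib


theorem stmt16 (p01 p11 B : ℝ) (h01 : p01 ∈ Set.Ioo (0:ℝ) 1) (h11 : p11 ∈ Set.Ioo (0:ℝ) 1)
    (hle : p01 ≤ p11) (hB : 0 < B)
    (ωo : ℝ) (hωo : ωo = p01 / (1 + p01 - p11))
    (W : ℝ → ℝ)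
    (hW1 : ∀ ω : ℝ, (0 ≤ ω ∧ ω ≤ p01) ∨ (p11 ≤ ω ∧ ω ≤ 1) → W ω = ω * B)
    (hW2 : ∀ ω : ℝ, ωo ≤ ω → ω < p11 → W ω = ω * B / (1 - p11 + ω)) :
    MonotoneOn W (Set.Icc 0 p01 ∪ Set.Icc ωo 1) ∧
    (∀ ω : ℝ, ωo ≤ ω → ω < p11 → W p01 ≤ W ω) ∧
    (ωo < p11 → Filter.Tendsto W (nhdsWithin p11 (Set.Ico ωo p11)) (nhds (W p11))) := by
  obtain ⟨hp01pos, hp01lt⟩ := h01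
  obtain ⟨hp11pos, hp11lt⟩ := h11
  have hd : 0 < 1 + p01 - p11 := by linarith
  have hωop : 0 < ωo := by rw [hωo]; positivity
  have hωoge : p01 ≤ ωo := by
    rw [hωo, le_div_iff₀ hd]; nlinarith
  have hωole : ωo ≤ p11 := by
    rw [hωo, div_le_iff₀ hd]; nlinarith
  refine ⟨?_, ?_, ?_⟩
  · rintro x (hx | hx) y (hy | hy) hxy
    · rw [hW1 x (Or.inl ⟨hx.1, hx.2⟩), hW1 y (Or.inl ⟨hy.1, hy.2⟩)]
      nlinarith
    · rw [hW1 x (Or.inl ⟨hx.1, hx.2⟩)]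
      by_cases hy' : y < p11
      · rw [hW2 y hy.1 hy']
        have hden : 0 < 1 - p11 + y := by linarith [hy.1]
        rw [le_div_iff₀ hden]
        nlinarith [mul_nonneg hx.1 hB.le]
      · rw [hW1 y (Or.inr ⟨le_of_not_gt hy', hy.2⟩)]
        nlinarith
    · have heq : x = y := le_antisymm hxy (by linarith [hx.1, hy.2])
      rw [heq]
    · by_cases hx' : x < p11
      · rw [hW2 x hx.1 hx']
        have hdenx : 0 < 1 - p11 + x := by linarith [hx.1]
        by_cases hy' : y < p11
        · rw [hW2 y hy.1 hy']
          have hdeny : 0 < 1 - p11 + y := by linarith [hy.1]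
          rw [div_le_div_iff₀ hdenx hdeny]
          nlinarith [mul_nonneg (mul_nonneg hB.le (sub_nonneg.2 hxy)) (by linarith : (0:ℝ) ≤ 1 - p11)]
        · rw [hW1 y (Or.inr ⟨le_of_not_gt hy', hy.2⟩)]
          rw [div_le_iff₀ hdenx]
          nlinarith [mul_nonneg hB.le (by linarith : (0:ℝ) ≤ 1 - p11),
            mul_nonneg (mul_nonneg hB.le (by linarith : (0:ℝ) ≤ y - p11)) hdenx.le]
      · rw [hW1 x (Or.inr ⟨le_of_not_gt hx', hx.2⟩),
          hW1 y (Or.inr ⟨le_trans (le_of_not_gt hx') hxy, hy.2⟩)]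
        nlinarith
  · intro ω hω1 hω2
    rw [hW1 p01 (Or.inl ⟨hp01pos.le, le_refl _⟩), hW2 ω hω1 hω2]
    have hden : 0 < 1 - p11 + ω := by linarith
    rw [le_div_iff₀ hden]
    nlinarith [mul_nonneg (mul_nonneg hB.le (by linarith : (0:ℝ) ≤ ω - p01)) hden.le,
      mul_nonneg (mul_nonneg hp01pos.le hB.le) (by linarith : (0:ℝ) ≤ p11 - ω)]
  · intro hlt
    have hWp11 : W p11 = p11 * B := hW1 p11 (Or.inr ⟨le_refl _, hp11lt.le⟩)
    have hcont : Filter.Tendsto (fun ω => ω * B / (1 - p11 + ω))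
        (nhdsWithin p11 (Set.Ico ωo p11)) (nhds (p11 * B / (1 - p11 + p11))) := by
      apply Filter.Tendsto.mono_left _ nhdsWithin_le_nhds
      exact ContinuousAt.div (by fun_prop) (by fun_prop) (by norm_num)
    have h1 : p11 * B / (1 - p11 + p11) = p11 * B := by ring_nf
    rw [hWp11]
    rw [h1] at hcont
    refine hcont.congr' ?_
    filter_upwards [self_mem_nhdsWithin] with x hx
    exact (hW2 x hx.1 hx.2).symm
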